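/- arXiv:2502.10020 — 2 statements merged into one kernel-verified Lean document; each statement's English description precedes it below -/
import Mathlib

section
/- Let d, T ∈ ℕ, λ̃ ≥ 2, κ ∈ (0,1], and let x_1, …, x_T ∈ ℝ^d with ‖x_t‖₂ ≤ 1 and scalars q_1, …, q_T with κ ≤ q_t ≤ 1 for all t. Let (τ_t)_{t∈[T]} be a nondecreasing sequence of positive reals. Define matrices by H̃_1 = λ̃ I_d and, for t ∈ [T], H̃_{t+1} = H̃_t + q_t x_t x_tᵀ if t ∈ 𝒲 and H̃_{t+1} = H̃_t otherwise, where 𝒲 = { t ∈ [T] : x_tᵀ H̃_t^{-1} x_t ≥ 1/τ_t² }. Then |𝒲| ≤ (2/κ) τ_T² d log(1 + T/(dλ̃)). -/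
open Matrix
open scoped Classical

set_option maxHeartbeats 1000000


lemma aux_log_one_add {u : ℝ} (h0 : 0 ≤ u) (h1 : u ≤ 1) : u / 2 ≤ Real.log (1 + u) := by
  rw [Real.le_log_iff_exp_le (by linarith)]
  have h2 : (1 : ℝ) - u / 2 ≤ Real.exp (-(u / 2)) := by
    have := Real.add_one_le_exp (-(u / 2)); linarith
  have h3 : 0 < 1 - u / 2 + u/2*0 := by linarith
  have h3' : (0:ℝ) < 1 - u / 2 := by linarith
  have h4 : Real.exp (u / 2) ≤ 1 / (1 - u / 2) := by
    rw [le_div_iff₀ h3']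
    have : Real.exp (u/2) * (1 - u/2) ≤ Real.exp (u/2) * Real.exp (-(u/2)) := by
      exact mul_le_mul_of_nonneg_left h2 (Real.exp_pos _).le
    rwa [← Real.exp_add, add_neg_cancel, Real.exp_zero] at this
  have h5 : 1 / (1 - u / 2) ≤ 1 + u := by
    rw [div_le_iff₀ h3']
    nlinarith
  linarith

lemma aux_vecMulVec_mulVec {d : ℕ} (w v y : Fin d → ℝ) :
    (vecMulVec w v) *ᵥ y = (v ⬝ᵥ y) • w := by
  ext i
  simp [Matrix.mulVec, vecMulVec_apply, dotProduct, Finset.mul_sum, mul_comm, mul_assoc,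
    mul_left_comm]

lemma aux_vecMulVec_herm {d : ℕ} (v : Fin d → ℝ) : (vecMulVec v v).IsHermitian := by
  ext i j
  simp [conjTranspose_apply, vecMulVec_apply, mul_comm]

lemma aux_trace_vecMulVec {d : ℕ} (v : Fin d → ℝ) : (vecMulVec v v).trace = v ⬝ᵥ v := by
  simp [Matrix.trace, Matrix.diag, vecMulVec_apply, dotProduct]

lemma aux_trace_eq_sum_eigenvalues {d : ℕ} {A : Matrix (Fin d) (Fin d) ℝ}
    (hA : A.IsHermitian) : A.trace = ∑ i, hA.eigenvalues i := by
  simpa using hA.trace_eq_sum_eigenvalues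

lemma aux_amgm {d : ℕ} (hd : 0 < d) (z : Fin d → ℝ) (hz : ∀ i, 0 ≤ z i) :
    ∏ i, z i ≤ ((∑ i, z i) / d) ^ d := by
  have hd' : (0:ℝ) < d := Nat.cast_pos.mpr hd
  have hw : ∑ _i : Fin d, (1:ℝ)/d = 1 := by
    simp [Finset.sum_const]
    field_simp
  have hgm := Real.geom_mean_le_arith_mean_weighted Finset.univ (fun _ => (1:ℝ)/d) z
    (fun i _ => by positivity) hw (fun i _ => hz i)
  have hP : ∀ i, (z i ^ ((1:ℝ)/d)) ^ d = z i := by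
    intro i
    rw [← Real.rpow_natCast (z i ^ ((1:ℝ)/d)) d, ← Real.rpow_mul (hz i)]
    field_simp
    simp
  calc ∏ i, z i = (∏ i, z i ^ ((1:ℝ)/d)) ^ d := by
        rw [← Finset.prod_pow]
        exact (Finset.prod_congr rfl fun i _ => (hP i)).symm
    _ ≤ ((∑ i, z i) / d) ^ d := by
        apply pow_le_pow_left₀ (Finset.prod_nonneg fun i _ => Real.rpow_nonneg (hz i) _)
        calc ∏ i, z i ^ ((1:ℝ)/d) ≤ ∑ i, (1/d) * z i := hgm
          _ = (∑ i, z i) / d := by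
              rw [Finset.sum_div]
              exact Finset.sum_congr rfl fun i _ => by ring

lemma aux_det_update {d : ℕ} {H : Matrix (Fin d) (Fin d) ℝ} (hH : IsUnit H.det)
    (c : ℝ) (v : Fin d → ℝ) :
    (H + c • vecMulVec v v).det = H.det * (1 + c * (v ⬝ᵥ H⁻¹.mulVec v)) := by
  have key : H + c • vecMulVec v v
      = H * (1 + replicateCol Unit (H⁻¹ *ᵥ (c • v)) * replicateRow Unit v) := by
    rw [Matrix.mul_add, Matrix.mul_one, ← Matrix.mul_assoc, ← Matrix.replicateCol_mulVec,
      Matrix.mulVec_mulVec, Matrix.mul_nonsing_inv _ hH, Matrix.one_mulVec]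
    congr 1
    rw [vecMulVec_eq Unit, Matrix.replicateCol_smul, Matrix.smul_mul]
  rw [key, Matrix.det_mul, Matrix.det_one_add_replicateCol_mul_replicateRow, Matrix.mulVec_smul,
    dotProduct_smul]
  simp only [smul_eq_mul]


/-- Euclidean (ℓ₂) norm on `Fin d → ℝ`. -/
noncomputable def l2norm {d : ℕ} (v : Fin d → ℝ) : ℝ := Real.sqrt (v ⬝ᵥ v)

/-- **Lemma D.7, bound on the number of warm-up rounds.**
With `H̃₁ = λ̃ I` and `H̃_{t+1} = H̃_t + q_t x_t x_tᵀ` exactly on the rounds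
`t ∈ 𝒲 = {t ∈ [T] : x_tᵀ H̃_t⁻¹ x_t ≥ 1/τ_t²}` (and `H̃_{t+1} = H̃_t`
otherwise), if `λ̃ ≥ 2`, `κ ≤ q_t ≤ 1`, `‖x_t‖₂ ≤ 1` and `τ` is a
nondecreasing positive threshold sequence, then
`|𝒲| ≤ (2/κ) τ_T² d log(1 + T/(dλ̃))`. -/
theorem warmup_round_count_bound {d : ℕ} (T : ℕ) (lamt κ : ℝ)
    (hlamt : 2 ≤ lamt) (hκ0 : 0 < κ) (hκ1 : κ ≤ 1)
    (x : ℕ → Fin d → ℝ) (hx : ∀ t ∈ Finset.Icc 1 T, l2norm (x t) ≤ 1)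
    (q : ℕ → ℝ) (hq : ∀ t ∈ Finset.Icc 1 T, κ ≤ q t ∧ q t ≤ 1)
    (τ : ℕ → ℝ) (hτpos : ∀ t, 0 < τ t) (hτmono : Monotone τ)
    (Htil : ℕ → Matrix (Fin d) (Fin d) ℝ)
    (hH1 : Htil 1 = lamt • (1 : Matrix (Fin d) (Fin d) ℝ))
    (hHrec : ∀ t ∈ Finset.Icc 1 T,
      Htil (t + 1) =
        if 1 / (τ t) ^ 2 ≤ x t ⬝ᵥ (Htil t)⁻¹.mulVec (x t)
        then Htil t + q t • vecMulVec (x t) (x t)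
        else Htil t) :
    (((Finset.Icc 1 T).filter
        (fun t => 1 / (τ t) ^ 2 ≤ x t ⬝ᵥ (Htil t)⁻¹.mulVec (x t))).card : ℝ)
      ≤ (2 / κ) * (τ T) ^ 2 * d * Real.log (1 + T / (d * lamt)) := by
  classical
  rcases Nat.eq_zero_or_pos d with hd0 | hd
  · subst hd0
    have hW : ((Finset.Icc 1 T).filter
        (fun t => 1 / (τ t) ^ 2 ≤ x t ⬝ᵥ (Htil t)⁻¹.mulVec (x t))) = ∅ := by
      apply Finset.filter_false_of_mem
      intro t ht
      have h1 : x t ⬝ᵥ (Htil t)⁻¹.mulVec (x t) = 0 := by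
        simp [dotProduct]
      rw [h1]
      push_neg
      have := hτpos t
      positivity
    rw [hW]
    simp
  have hlam0 : (0:ℝ) < lamt := by linarith
  have hd' : (0:ℝ) < d := Nat.cast_pos.mpr hd
  -- dot product of x with itself is ≤ 1
  have hxx : ∀ t ∈ Finset.Icc 1 T, x t ⬝ᵥ x t ≤ 1 := by
    intro t ht
    have h0 : 0 ≤ x t ⬝ᵥ x t := Finset.sum_nonneg fun i _ => mul_self_nonneg _
    have h1 := hx t ht
    unfold l2norm at h1
    nlinarith [Real.sq_sqrt h0, Real.sqrt_nonneg (x t ⬝ᵥ x t)]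
  -- main invariant
  have hInv : ∀ t, 1 ≤ t → t ≤ T + 1 →
      (Htil t).IsHermitian ∧ (∀ y : Fin d → ℝ, lamt * (y ⬝ᵥ y) ≤ y ⬝ᵥ (Htil t).mulVec y)
        ∧ (Htil t).trace ≤ d * lamt + (t : ℝ) - 1 := by
    intro t ht1
    induction t, ht1 using Nat.le_induction with
    | base =>
      intro _
      rw [hH1]
      refine ⟨?_, ?_, ?_⟩
      · unfold Matrix.IsHermitian
        simp
      · intro y
        simp [Matrix.smul_mulVec, Matrix.one_mulVec, dotProduct_smul,
          smul_eq_mul]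
      · rw [Matrix.trace_smul, Matrix.trace_one]
        simp [smul_eq_mul]
        ring_nf
        linarith
    | succ n hn ih =>
      intro hle
      have hnT : n ≤ T := by omega
      obtain ⟨ih1, ih2, ih3⟩ := ih (by omega)
      have hmem : n ∈ Finset.Icc 1 T := by simp [Finset.mem_Icc]; omega
      obtain ⟨hqκ, hq1⟩ := hq n hmem
      have hq0 : 0 < q n := lt_of_lt_of_le hκ0 hqκ
      rw [hHrec n hmem]
      by_cases hc : 1 / (τ n) ^ 2 ≤ x n ⬝ᵥ (Htil n)⁻¹.mulVec (x n)
      · rw [if_pos hc]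
        refine ⟨?_, ?_, ?_⟩
        · apply ih1.add
          unfold Matrix.IsHermitian
          ext i j
          simp [Matrix.conjTranspose_apply, Matrix.smul_apply, vecMulVec_apply, mul_comm]
        · intro y
          rw [Matrix.add_mulVec, dotProduct_add, Matrix.smul_mulVec,
            aux_vecMulVec_mulVec, dotProduct_smul, dotProduct_smul]
          have h1 : 0 ≤ q n • ((x n ⬝ᵥ y) • (y ⬝ᵥ x n)) := by
            simp only [smul_eq_mul, dotProduct_comm y (x n)]
            exact mul_nonneg hq0.le (mul_self_nonneg _)
          have := ih2 y
          simp only [smul_eq_mul] at h1 ⊢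
          linarith
        · rw [Matrix.trace_add, Matrix.trace_smul, aux_trace_vecMulVec]
          have h1 : q n • (x n ⬝ᵥ x n) ≤ 1 := by
            have h2 : 0 ≤ x n ⬝ᵥ x n := Finset.sum_nonneg fun i _ => mul_self_nonneg _
            have h3 := hxx n hmem
            simp only [smul_eq_mul]
            nlinarith
          push_cast
          linarith
      · rw [if_neg hc]
        refine ⟨ih1, ih2, ?_⟩
        push_cast
        linarith
  -- positive definiteness
  have hPD : ∀ t, 1 ≤ t → t ≤ T + 1 → (Htil t).PosDef := by
    intro t ht1 ht2
    obtain ⟨h1, h2, _⟩ := hInv t ht1 ht2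
    refine Matrix.PosDef.of_dotProduct_mulVec_pos h1 fun y hy => ?_
    have h0 : 0 ≤ y ⬝ᵥ y := Finset.sum_nonneg fun i _ => mul_self_nonneg _
    have hne : y ⬝ᵥ y ≠ 0 := fun h => hy (dotProduct_self_eq_zero.mp h)
    have hyy : 0 < y ⬝ᵥ y := lt_of_le_of_ne h0 (Ne.symm hne)
    have := h2 y
    simp only [star_trivial]
    nlinarith
  -- bounds on s t
  have hs : ∀ t ∈ Finset.Icc 1 T,
      0 ≤ x t ⬝ᵥ (Htil t)⁻¹.mulVec (x t) ∧ q t * (x t ⬝ᵥ (Htil t)⁻¹.mulVec (x t)) ≤ 1/2 := by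
    intro t ht
    simp only [Finset.mem_Icc] at ht
    have hPDt := hPD t ht.1 (by omega)
    have hinv := hPDt.inv
    have hs0 : 0 ≤ x t ⬝ᵥ (Htil t)⁻¹.mulVec (x t) := by
      have := hinv.posSemidef.dotProduct_mulVec_nonneg (x t)
      simpa using this
    refine ⟨hs0, ?_⟩
    set yv := (Htil t)⁻¹ *ᵥ (x t) with hyv
    have hUnit : IsUnit (Htil t).det := hPDt.det_pos.ne'.isUnit
    have hHy : Htil t *ᵥ yv = x t := by
      rw [hyv, Matrix.mulVec_mulVec, Matrix.mul_nonsing_inv _ hUnit, Matrix.one_mulVec]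
    obtain ⟨_, h2, _⟩ := hInv t ht.1 (by omega)
    have hquad : lamt * (yv ⬝ᵥ yv) ≤ x t ⬝ᵥ yv := by
      have := h2 yv
      rw [hHy] at this
      rwa [dotProduct_comm yv (x t)] at this
    have hcs := Finset.sum_mul_sq_le_sq_mul_sq Finset.univ (x t) yv
    have hcs' : (x t ⬝ᵥ yv)^2 ≤ (x t ⬝ᵥ x t) * (yv ⬝ᵥ yv) := by
      simpa [dotProduct, sq, Finset.sum_mul_sq_le_sq_mul_sq] using hcs
    have hxx1 := hxx t (by simp [Finset.mem_Icc]; omega)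
    have hyy0 : 0 ≤ yv ⬝ᵥ yv := Finset.sum_nonneg fun i _ => mul_self_nonneg _
    obtain ⟨hqκ, hq1⟩ := hq t (by simp [Finset.mem_Icc]; omega)
    have hq0 : 0 < q t := lt_of_lt_of_le hκ0 hqκ
    have hshalf : x t ⬝ᵥ yv ≤ 1/2 := by
      nlinarith [mul_nonneg (sub_nonneg.mpr hxx1) hyy0, sq_nonneg (x t ⬝ᵥ yv)]
    nlinarith
  -- telescoping log-determinant identity
  have hlog : ∀ n, n ≤ T → Real.log (Htil (n+1)).det
      = Real.log (Htil 1).det + ∑ t ∈ Finset.Icc 1 n,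
          (if 1 / (τ t) ^ 2 ≤ x t ⬝ᵥ (Htil t)⁻¹.mulVec (x t)
            then Real.log (1 + q t * (x t ⬝ᵥ (Htil t)⁻¹.mulVec (x t))) else 0) := by
    intro n
    induction n with
    | zero => simp
    | succ n ih =>
      intro hle
      have hmem : n + 1 ∈ Finset.Icc 1 T := by simp [Finset.mem_Icc]; omega
      have hUnit : IsUnit (Htil (n+1)).det := (hPD (n+1) (by omega) (by omega)).det_pos.ne'.isUnit
      rw [hHrec (n+1) hmem, Finset.sum_Icc_succ_top (by omega : 1 ≤ n + 1)]
      by_cases hc : 1 / (τ (n+1)) ^ 2 ≤ x (n+1) ⬝ᵥ (Htil (n+1))⁻¹.mulVec (x (n+1))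
      · rw [if_pos hc, if_pos hc, aux_det_update hUnit, Real.log_mul
          (hPD (n+1) (by omega) (by omega)).det_pos.ne' ?_, ih (by omega)]
        · ring
        · obtain ⟨hs0, _⟩ := hs (n+1) hmem
          obtain ⟨hqκ, _⟩ := hq (n+1) hmem
          have : 0 ≤ q (n+1) * (x (n+1) ⬝ᵥ (Htil (n+1))⁻¹.mulVec (x (n+1))) :=
            mul_nonneg (by linarith) hs0
          positivity
      · rw [if_neg hc, if_neg hc, ih (by omega)]
        ring
  -- lower bound on the sum
  have hlower : (((Finset.Icc 1 T).filter
        (fun t => 1 / (τ t) ^ 2 ≤ x t ⬝ᵥ (Htil t)⁻¹.mulVec (x t))).card : ℝ)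
          * (κ / (2 * (τ T) ^ 2))
      ≤ ∑ t ∈ Finset.Icc 1 T,
          (if 1 / (τ t) ^ 2 ≤ x t ⬝ᵥ (Htil t)⁻¹.mulVec (x t)
            then Real.log (1 + q t * (x t ⬝ᵥ (Htil t)⁻¹.mulVec (x t))) else 0) := by
    rw [← Finset.sum_filter]
    have hc := Finset.card_nsmul_le_sum
      ((Finset.Icc 1 T).filter (fun t => 1 / (τ t) ^ 2 ≤ x t ⬝ᵥ (Htil t)⁻¹.mulVec (x t)))
      (fun t => Real.log (1 + q t * (x t ⬝ᵥ (Htil t)⁻¹.mulVec (x t))))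
      (κ / (2 * (τ T) ^ 2)) ?_
    · simpa [nsmul_eq_mul] using hc
    · intro t ht
      simp only [Finset.mem_filter, Finset.mem_Icc] at ht
      obtain ⟨⟨ht1, ht2⟩, hcond⟩ := ht
      have htmem : t ∈ Finset.Icc 1 T := by simp [Finset.mem_Icc]; omega
      obtain ⟨hs0, hs12⟩ := hs t htmem
      obtain ⟨hqκ, hq1⟩ := hq t htmem
      have hq0 : 0 < q t := lt_of_lt_of_le hκ0 hqκ
      have hu0 : 0 ≤ q t * (x t ⬝ᵥ (Htil t)⁻¹.mulVec (x t)) := mul_nonneg hq0.le hs0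
      have hu1 : q t * (x t ⬝ᵥ (Htil t)⁻¹.mulVec (x t)) ≤ 1 := by linarith
      have hτt := hτpos t
      have hτT := hτpos T
      have hττ : τ t ≤ τ T := hτmono ht2
      have step1 : κ / (2 * (τ T) ^ 2) ≤ κ / (2 * (τ t) ^ 2) := by
        apply div_le_div_of_nonneg_left hκ0.le (by positivity)
        nlinarith
      have step2 : κ / (2 * (τ t) ^ 2) ≤ q t * (x t ⬝ᵥ (Htil t)⁻¹.mulVec (x t)) / 2 := by
        have hmul : κ * (1 / (τ t) ^ 2) ≤ q t * (x t ⬝ᵥ (Htil t)⁻¹.mulVec (x t)) :=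
          mul_le_mul hqκ hcond (by positivity) hq0.le
        have heq : κ / (2 * (τ t) ^ 2) = κ * (1 / (τ t) ^ 2) / 2 := by
          field_simp
        rw [heq]
        linarith
      have step3 := aux_log_one_add hu0 hu1
      linarith
  -- upper bound on log det
  have hPDT := hPD (T+1) (by omega) (by omega)
  have hherm := hPDT.isHermitian
  have hev : ∀ i, 0 ≤ hherm.eigenvalues i := fun i => hPDT.posSemidef.eigenvalues_nonneg i
  have htr : (Htil (T+1)).trace ≤ d * lamt + T := by
    obtain ⟨_, _, h3⟩ := hInv (T+1) (by omega) (by omega)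
    push_cast at h3 ⊢
    linarith
  have htr_eq : (Htil (T+1)).trace = ∑ i, hherm.eigenvalues i :=
    aux_trace_eq_sum_eigenvalues hherm
  have hdet_eq : (Htil (T+1)).det = ∏ i, hherm.eigenvalues i := by
    have := hherm.det_eq_prod_eigenvalues
    simpa [RCLike.ofReal_real_eq_id] using this
  have hdT : (0:ℝ) < d * lamt + T := by positivity
  have hdet_le : (Htil (T+1)).det ≤ ((d * lamt + T)/d)^d := by
    rw [hdet_eq]
    have hsum : ∑ i, hherm.eigenvalues i ≤ d * lamt + T := by rw [← htr_eq]; exact htr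
    have h0 : 0 ≤ ∑ i, hherm.eigenvalues i := Finset.sum_nonneg fun i _ => hev i
    calc ∏ i, hherm.eigenvalues i ≤ ((∑ i, hherm.eigenvalues i)/d)^d := aux_amgm hd _ hev
      _ ≤ ((d * lamt + T)/d)^d := by
          apply pow_le_pow_left₀ (div_nonneg h0 hd'.le)
          gcongr
  have hlogdet_le : Real.log (Htil (T+1)).det ≤ d * Real.log ((d * lamt + T)/d) := by
    calc Real.log (Htil (T+1)).det ≤ Real.log (((d * lamt + T)/d)^d) :=
          Real.log_le_log hPDT.det_pos hdet_le
      _ = d * Real.log ((d * lamt + T)/d) := by rw [Real.log_pow]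
  have hlog1 : Real.log (Htil 1).det = d * Real.log lamt := by
    rw [hH1, Matrix.det_smul, Matrix.det_one, mul_one]
    simp [Real.log_pow]
  have hmain := hlog T (le_refl T)
  have harg : ((d * lamt + (T:ℝ))/d)/lamt = 1 + T/(d * lamt) := by
    field_simp
  have h3 : (d:ℝ) * Real.log ((d * lamt + T)/d) - d * Real.log lamt
      = d * Real.log (1 + T/(d * lamt)) := by
    rw [← mul_sub, ← Real.log_div (by positivity : (0:ℝ) < (d * lamt + T)/d).ne' hlam0.ne',
      harg]
  have hkey : (((Finset.Icc 1 T).filter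
        (fun t => 1 / (τ t) ^ 2 ≤ x t ⬝ᵥ (Htil t)⁻¹.mulVec (x t))).card : ℝ)
          * (κ / (2 * (τ T) ^ 2)) ≤ d * Real.log (1 + T/(d * lamt)) := by
    rw [hlog1] at hmain
    linarith [hlower, hlogdet_le, hmain]
  have hτT := hτpos T
  have hposc : 0 < κ / (2 * (τ T) ^ 2) := by positivity
  have heq2 : (2/κ) * (τ T)^2 * d * Real.log (1 + T/(d * lamt))
      = (d * Real.log (1 + T/(d * lamt))) / (κ / (2 * (τ T) ^ 2)) := by
    field_simp
  rw [heq2, le_div_iff₀ hposc]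
  exact hkey
end

section
/- Let K ≥ 1, let r ∈ [0,1]^K, and define Q̃ : ℝ^K → ℝ by Q̃(u) = Σ_{i=1}^K exp(u_i) r_i / (1 + Σ_{k=1}^K exp(u_k)), and write p_i(u) = exp(u_i)/(1 + Σ_{k=1}^K exp(u_k)). Then for all u, v ∈ ℝ^K: vᵀ ∇²Q̃(u) v ≤ 5 Σ_{i=1}^K p_i(u) v_i². -/
/-- Softmax probabilities: `pᵢ(u) = exp(uᵢ)/(1 + Σₖ exp(uₖ))`. -/
noncomputable def softmaxP (K : ℕ) (u : Fin K → ℝ) (i : Fin K) : ℝ :=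
  Real.exp (u i) / (1 + ∑ k, Real.exp (u k))

/-- Expected revenue of an assortment under the MNL model, as a function of
the item utilities `u`, with rewards `r`:
`Q̃(u) = Σᵢ exp(uᵢ) rᵢ / (1 + Σₖ exp(uₖ))`. -/
noncomputable def mnlRevenue (K : ℕ) (r : Fin K → ℝ) (u : Fin K → ℝ) : ℝ :=
  (∑ i, Real.exp (u i) * r i) / (1 + ∑ k, Real.exp (u k))

set_option maxHeartbeats 1000000 in
/-- Quadratic-form bound on the Hessian of the expected
revenue: for rewards `r ∈ [0,1]^K` and all `u, v ∈ ℝ^K`,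
`vᵀ ∇²Q̃(u) v ≤ 5 Σᵢ pᵢ(u) vᵢ²`, where the left-hand side is expressed as the
second directional derivative `d²/ds²|₀ Q̃(u + s v)`. -/
theorem mnl_revenue_hessian_quadform_bound (K : ℕ) (hK : 1 ≤ K)
    (r : Fin K → ℝ) (hr : ∀ i, r i ∈ Set.Icc (0:ℝ) 1) (u v : Fin K → ℝ) :
    iteratedDeriv 2 (fun s : ℝ => mnlRevenue K r (u + s • v)) 0
      ≤ 5 * ∑ i, softmaxP K u i * (v i) ^ 2 := by
  classical
  set N : ℝ → ℝ := fun s => ∑ i, Real.exp (u i + s * v i) * r i with hNdef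
  set D : ℝ → ℝ := fun s => 1 + ∑ k, Real.exp (u k + s * v k) with hDdef
  set N₁ : ℝ → ℝ := fun s => ∑ i, v i * Real.exp (u i + s * v i) * r i with hN1def
  set D₁ : ℝ → ℝ := fun s => ∑ k, v k * Real.exp (u k + s * v k) with hD1def
  -- scalar abbreviations (values at 0)
  set S0 : ℝ := ∑ i, Real.exp (u i) * r i with hS0def
  set S1 : ℝ := ∑ i, v i * Real.exp (u i) * r i with hS1def
  set S2 : ℝ := ∑ i, v i * (v i * Real.exp (u i)) * r i with hS2def
  set T0 : ℝ := ∑ k, Real.exp (u k) with hT0def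
  set T1 : ℝ := ∑ k, v k * Real.exp (u k) with hT1def
  set T2 : ℝ := ∑ k, v k * (v k * Real.exp (u k)) with hT2def
  set Dv : ℝ := 1 + T0 with hDvdef
  have hfeq : (fun s : ℝ => mnlRevenue K r (u + s • v)) = fun s => N s / D s := by
    funext s
    simp [mnlRevenue, hNdef, hDdef]
  have hexp : ∀ (i : Fin K) (s : ℝ),
      HasDerivAt (fun t => Real.exp (u i + t * v i)) (v i * Real.exp (u i + s * v i)) s := by
    intro i s
    have h1 : HasDerivAt (fun t : ℝ => u i + t * v i) (v i) s := by
      simpa using (hasDerivAt_mul_const (v i)).const_add (u i)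
    simpa [mul_comm] using h1.exp
  have hDpos : ∀ s, 0 < D s := by
    intro s
    have : (0:ℝ) ≤ ∑ k, Real.exp (u k + s * v k) :=
      Finset.sum_nonneg fun k _ => (Real.exp_pos _).le
    simp only [hDdef]; linarith
  have hN : ∀ s, HasDerivAt N (N₁ s) s := fun s =>
    HasDerivAt.fun_sum fun i _ => (hexp i s).mul_const (r i)
  have hD : ∀ s, HasDerivAt D (D₁ s) s := fun s =>
    (HasDerivAt.fun_sum fun k _ => hexp k s).const_add 1
  have hN10 : N₁ 0 = S1 := by
    simp only [hN1def, hS1def]; simp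
  have hD10 : D₁ 0 = T1 := by
    simp only [hD1def, hT1def]; simp
  have hN0 : N 0 = S0 := by
    simp only [hNdef, hS0def]; simp
  have hD0 : D 0 = Dv := by
    simp only [hDdef, hDvdef, hT0def]; simp
  have hN1 : HasDerivAt N₁ S2 0 := by
    have h := HasDerivAt.fun_sum (u := Finset.univ)
      fun i (_ : i ∈ Finset.univ) => ((hexp i 0).const_mul (v i)).mul_const (r i)
    rw [hS2def]
    simpa using h
  have hD1 : HasDerivAt D₁ T2 0 := by
    have h := HasDerivAt.fun_sum (u := Finset.univ)
      fun k (_ : k ∈ Finset.univ) => (hexp k 0).const_mul (v k)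
    rw [hT2def]
    simpa using h
  have hderiv1 : deriv (fun s => N s / D s) = fun s =>
      (N₁ s * D s - N s * D₁ s) / (D s) ^ 2 := by
    funext s
    exact ((hN s).div (hD s) (hDpos s).ne').deriv
  -- second derivative at 0
  have hnum : HasDerivAt (fun s => N₁ s * D s - N s * D₁ s)
      (S2 * Dv + S1 * T1 - (S1 * T1 + S0 * T2)) 0 := by
    have h := (hN1.mul (hD 0)).sub ((hN 0).mul hD1)
    rw [hN0, hD0, hN10, hD10] at h
    exact h
  have hden : HasDerivAt (fun s => (D s) ^ 2) ((2:ℕ) * Dv ^ 1 * T1) 0 := by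
    have h := (hD 0).fun_pow 2
    rw [hD0, hD10] at h
    simpa using h
  have hDvpos : 0 < Dv := by rw [hDvdef] at hD0 ⊢; rw [← hD0]; exact hDpos 0
  have hden_ne : (D 0) ^ 2 ≠ 0 := pow_ne_zero 2 (hDpos 0).ne'
  have key : HasDerivAt (fun s => (N₁ s * D s - N s * D₁ s) / (D s) ^ 2)
      (((S2 * Dv + S1 * T1 - (S1 * T1 + S0 * T2)) * Dv ^ 2
        - (S1 * Dv - S0 * T1) * ((2:ℕ) * Dv ^ 1 * T1)) / (Dv ^ 2) ^ 2) 0 := by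
    have h := hnum.div hden (pow_ne_zero 2 (hDpos 0).ne')
    rw [hN0, hD0, hN10, hD10] at h
    exact h
  -- rewrite the goal
  have hiter : iteratedDeriv 2 (fun s : ℝ => mnlRevenue K r (u + s • v)) 0
      = ((S2 * Dv + S1 * T1 - (S1 * T1 + S0 * T2)) * Dv ^ 2
        - (S1 * Dv - S0 * T1) * ((2:ℕ) * Dv ^ 1 * T1)) / (Dv ^ 2) ^ 2 := by
    rw [iteratedDeriv_succ, iteratedDeriv_one, hfeq, hderiv1]
    exact key.deriv
  have hRHS : (5:ℝ) * ∑ i, softmaxP K u i * (v i) ^ 2 = 5 * (T2 / Dv) := by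
    rw [hT2def, hDvdef, hT0def, Finset.sum_div]
    congr 1
    apply Finset.sum_congr rfl
    intro i _
    simp only [softmaxP]
    ring
  rw [hiter, hRHS]
  -- now the algebraic inequality
  have hT0nn : 0 ≤ T0 := Finset.sum_nonneg fun k _ => (Real.exp_pos _).le
  have hT2nn : 0 ≤ T2 := Finset.sum_nonneg fun k _ => by
    have : v k * (v k * Real.exp (u k)) = v k ^ 2 * Real.exp (u k) := by ring
    rw [this]; positivity
  have hS0nn : 0 ≤ S0 := Finset.sum_nonneg fun i _ =>
    mul_nonneg (Real.exp_pos _).le (hr i).1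
  have hS0le : S0 ≤ T0 := Finset.sum_le_sum fun i _ =>
    mul_le_of_le_one_right (Real.exp_pos _).le (hr i).2
  have hS2le : S2 ≤ T2 := Finset.sum_le_sum fun i _ => by
    have hnn : 0 ≤ v i * (v i * Real.exp (u i)) := by
      have : v i * (v i * Real.exp (u i)) = v i ^ 2 * Real.exp (u i) := by ring
      rw [this]; positivity
    exact mul_le_of_le_one_right hnn (hr i).2
  set M : ℝ := ∑ i, |v i| * Real.exp (u i) with hMdef
  have hMnn : 0 ≤ M := Finset.sum_nonneg fun i _ => by positivity
  have hS1abs : |S1| ≤ M := by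
    rw [hS1def, hMdef]
    refine (Finset.abs_sum_le_sum_abs _ _).trans (Finset.sum_le_sum fun i _ => ?_)
    rw [abs_mul, abs_mul, Real.abs_exp]
    have h1 : |r i| ≤ 1 := abs_le.2 ⟨by linarith [(hr i).1], (hr i).2⟩
    calc |v i| * Real.exp (u i) * |r i| ≤ |v i| * Real.exp (u i) * 1 := by
          apply mul_le_mul_of_nonneg_left h1; positivity
      _ = |v i| * Real.exp (u i) := by ring
  have hT1abs : |T1| ≤ M := by
    rw [hT1def, hMdef]
    refine (Finset.abs_sum_le_sum_abs _ _).trans (le_of_eq ?_)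
    apply Finset.sum_congr rfl
    intro k _
    rw [abs_mul, Real.abs_exp]
  have hCS : M ^ 2 ≤ T0 * T2 := by
    rw [hMdef, hT0def, hT2def]
    apply Finset.sum_sq_le_sum_mul_sum_of_sq_eq_mul
    · intro i _; exact (Real.exp_pos _).le
    · intro i _
      have : v i * (v i * Real.exp (u i)) = v i ^ 2 * Real.exp (u i) := by ring
      rw [this]; positivity
    · intro i _
      rw [mul_pow, sq_abs]
      ring
  have habs : -(S1 * T1) ≤ M ^ 2 := by
    calc -(S1 * T1) ≤ |S1 * T1| := neg_le_abs _
      _ = |S1| * |T1| := abs_mul _ _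
      _ ≤ M * M := mul_le_mul hS1abs hT1abs (abs_nonneg _) hMnn
      _ = M ^ 2 := by ring
  have hT1sq : T1 ^ 2 ≤ M ^ 2 := by
    rw [← sq_abs T1]
    exact pow_le_pow_left₀ (abs_nonneg _) hT1abs 2
  have hDv1 : (1:ℝ) ≤ Dv := by rw [hDvdef]; linarith
  have hT0Dv : T0 ≤ Dv := by rw [hDvdef]; linarith
  -- the four bounds
  have f1 : Dv ^ 4 * S2 ≤ Dv ^ 4 * T2 := by
    apply mul_le_mul_of_nonneg_left hS2le; positivity
  have f2 : (0:ℝ) ≤ Dv ^ 3 * (S0 * T2) := by positivity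
  have f3 : -(Dv ^ 3 * (S1 * T1)) ≤ Dv ^ 4 * T2 := by
    calc -(Dv ^ 3 * (S1 * T1)) = Dv ^ 3 * (-(S1 * T1)) := by ring
      _ ≤ Dv ^ 3 * M ^ 2 := by apply mul_le_mul_of_nonneg_left habs; positivity
      _ ≤ Dv ^ 3 * (T0 * T2) := by apply mul_le_mul_of_nonneg_left hCS; positivity
      _ ≤ Dv ^ 3 * (Dv * T2) := by
          apply mul_le_mul_of_nonneg_left _ (by positivity)
          exact mul_le_mul_of_nonneg_right hT0Dv hT2nn
      _ = Dv ^ 4 * T2 := by ring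
  have f4 : Dv ^ 2 * (S0 * T1 ^ 2) ≤ Dv ^ 4 * T2 := by
    have h1 : S0 * T1 ^ 2 ≤ T0 * M ^ 2 := by
      calc S0 * T1 ^ 2 ≤ S0 * M ^ 2 := mul_le_mul_of_nonneg_left hT1sq hS0nn
        _ ≤ T0 * M ^ 2 := mul_le_mul_of_nonneg_right hS0le (by positivity)
    calc Dv ^ 2 * (S0 * T1 ^ 2) ≤ Dv ^ 2 * (T0 * M ^ 2) := by
          apply mul_le_mul_of_nonneg_left h1; positivity
      _ ≤ Dv ^ 2 * (T0 * (T0 * T2)) := by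
          apply mul_le_mul_of_nonneg_left _ (by positivity)
          exact mul_le_mul_of_nonneg_left hCS hT0nn
      _ ≤ Dv ^ 2 * (Dv * (Dv * T2)) := by
          apply mul_le_mul_of_nonneg_left _ (by positivity)
          apply mul_le_mul hT0Dv (mul_le_mul_of_nonneg_right hT0Dv hT2nn)
            (by positivity) hDvpos.le
      _ = Dv ^ 4 * T2 := by ring
  have h5 : (5:ℝ) * (T2 / Dv) = (5 * T2) / Dv := by ring
  rw [h5, div_le_div_iff₀ (by positivity) hDvpos]
  push_cast
  nlinarith [f1, f2, f3, f4]
end
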